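/- If D ⊢ +φ p for a literal p with p ∉ F in a consistent defeasible theory D, then D ⊢ −Σ ∼p (there is no reasoning chain supporting the complement of p). -/
import Mathlib


namespace DL

abbrev Atom := ℕ

/-- A literal: an atom with a polarity. -/
structure Lit where
  atom : Atom
  pos : Bool
deriving DecidableEq

/-- The complement `∼p` of a literal. -/
def Lit.neg (l : Lit) : Lit := ⟨l.atom, !l.pos⟩

/-- A defeasible rule: a finite set of antecedent literals and a head literal. -/
structure Rule where
  ante : Finset Lit
  head : Lit
deriving DecidableEq

/-- A defeasible theory: facts, defeasible rules, and a superiority relation. -/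
structure DTheory where
  facts : Finset Lit
  rules : Finset Rule
  sup : Rule → Rule → Prop

/-- A superiority relation is acyclic iff its transitive closure is irreflexive. -/
def Acyclic (sup : Rule → Rule → Prop) : Prop :=
  Irreflexive (Relation.TransGen sup)

def DTheory.FactsConsistent (D : DTheory) : Prop :=
  ∀ l ∈ D.facts, l.neg ∉ D.facts

/-- Well-formedness of a defeasible theory: consistent facts, acyclic superiority
relation defined on the rules of the theory. -/
def DTheory.WellFormed (D : DTheory) : Prop :=
  D.FactsConsistent ∧ Acyclic D.sup ∧ ∀ r s, D.sup r s → r ∈ D.rules ∧ s ∈ D.rules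

/-- Proof tags: Δ, Σ, σ, ω, φ, ∂. -/
inductive Tag | delta | Sig | sgm | omg | phi | prt
deriving DecidableEq

/-- A tagged literal: a tag, a sign (`true` = `+`, `false` = `−`), and a literal. -/
abbrev TLit := Tag × Bool × Lit

/-- The proof conditions of Defeasible Logic (defeasible rules only), relative to
the preceding part `P` of a proof sequence. -/
def Cond (D : DTheory) (P : List TLit) : Tag → Bool → Lit → Prop
  | .delta, true, q => q ∈ D.facts
  | .delta, false, q => q ∉ D.facts
  | .Sig, true, q =>
      (Tag.delta, true, q) ∈ P ∨
      ∃ r ∈ D.rules, r.head = q ∧ ∀ a ∈ r.ante, (Tag.Sig, true, a) ∈ P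
  | .Sig, false, q =>
      (Tag.delta, true, q) ∉ P ∧
      ∀ r ∈ D.rules, r.head = q → ∃ a ∈ r.ante, (Tag.Sig, false, a) ∈ P
  | .sgm, true, q =>
      (Tag.delta, true, q) ∈ P ∨
      ∃ r ∈ D.rules, r.head = q ∧ (∀ a ∈ r.ante, (Tag.sgm, true, a) ∈ P) ∧
        ∀ s ∈ D.rules, s.head = q.neg →
          (∃ a ∈ s.ante, (Tag.prt, false, a) ∈ P) ∨ ¬ D.sup s r
  | .sgm, false, q =>
      (Tag.delta, true, q) ∉ P ∧
      ∀ r ∈ D.rules, r.head = q →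
        (∃ a ∈ r.ante, (Tag.sgm, false, a) ∈ P) ∨
        ∃ s ∈ D.rules, s.head = q.neg ∧ (∀ a ∈ s.ante, (Tag.prt, true, a) ∈ P) ∧ D.sup s r
  | .omg, true, q =>
      (Tag.delta, true, q) ∈ P ∨
      ∃ r ∈ D.rules, r.head = q ∧ ∀ a ∈ r.ante, (Tag.prt, true, a) ∈ P
  | .omg, false, q =>
      (Tag.delta, true, q) ∉ P ∧
      ∀ r ∈ D.rules, r.head = q → ∃ a ∈ r.ante, (Tag.prt, false, a) ∈ P
  | .phi, true, q =>
      (Tag.delta, true, q) ∈ P ∨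
      ∃ r ∈ D.rules, r.head = q ∧ (∀ a ∈ r.ante, (Tag.phi, true, a) ∈ P) ∧
        ∀ s ∈ D.rules, s.head = q.neg → ∃ a ∈ s.ante, (Tag.Sig, false, a) ∈ P
  | .phi, false, q =>
      (Tag.delta, true, q) ∉ P ∧
      ∀ r ∈ D.rules, r.head = q →
        (∃ a ∈ r.ante, (Tag.phi, false, a) ∈ P) ∨
        ∃ s ∈ D.rules, s.head = q.neg ∧ ∀ a ∈ s.ante, (Tag.Sig, true, a) ∈ P
  | .prt, true, q =>
      (Tag.delta, true, q) ∈ P ∨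
      ((Tag.delta, false, q.neg) ∈ P ∧
       (∃ r ∈ D.rules, r.head = q ∧ ∀ a ∈ r.ante, (Tag.prt, true, a) ∈ P) ∧
       ∀ s ∈ D.rules, s.head = q.neg →
         (∃ a ∈ s.ante, (Tag.prt, false, a) ∈ P) ∨
         ∃ t ∈ D.rules, t.head = q ∧ (∀ a ∈ t.ante, (Tag.prt, true, a) ∈ P) ∧ D.sup t s)
  | .prt, false, q =>
      (Tag.delta, true, q) ∉ P ∧
      ((Tag.delta, true, q.neg) ∈ P ∨
       (∀ r ∈ D.rules, r.head = q → ∃ a ∈ r.ante, (Tag.prt, false, a) ∈ P) ∨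
       ∃ s ∈ D.rules, s.head = q.neg ∧ (∀ a ∈ s.ante, (Tag.prt, true, a) ∈ P) ∧
         ∀ t ∈ D.rules, t.head = q →
           (∃ a ∈ t.ante, (Tag.prt, false, a) ∈ P) ∨ ¬ D.sup t s)

/-- A proof (derivation) is a finite sequence of tagged literals each of which
satisfies the proof condition relative to the preceding part of the sequence. -/
inductive ValidProof (D : DTheory) : List TLit → Prop
  | nil : ValidProof D []
  | snoc {P : List TLit} {t : Tag} {s : Bool} {q : Lit} :
      ValidProof D P → Cond D P t s q → ValidProof D (P ++ [(t, s, q)])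

/-- `D ⊢ ±# q`: some valid proof in `D` contains the tagged literal. -/
def Proves (D : DTheory) (t : Tag) (s : Bool) (q : Lit) : Prop :=
  ∃ P, ValidProof D P ∧ (t, s, q) ∈ P

/-- A theory is consistent iff it never defeasibly proves both a literal and
its complement. -/
def Consistent (D : DTheory) : Prop :=
  ∀ p : Lit, ¬ (Proves D .prt true p ∧ Proves D .prt true p.neg)

/-- `a` depends on `b` iff `b = a`, or for every rule for `a` either `b` is an
antecedent or some antecedent depends on `b` (least such relation,
impredicatively encoded). -/
def DependsOn (D : DTheory) (a b : Lit) : Prop :=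
  ∀ S : Lit → Lit → Prop,
    (∀ x, S x x) →
    (∀ x y, (∀ r ∈ D.rules, r.head = x → y ∈ r.ante ∨ ∃ c ∈ r.ante, S c y) → S x y) →
    S a b

/-- `p` is ∂-unreachable iff every rule for `p` either has two antecedents
depending on complementary literals or has a ∂-unreachable antecedent
(least such predicate, impredicatively encoded). -/
def Unreachable (D : DTheory) (p : Lit) : Prop :=
  ∀ S : Lit → Prop,
    (∀ x, (∀ r ∈ D.rules, r.head = x →
        (∃ l : Lit, ∃ a ∈ r.ante, ∃ b ∈ r.ante, DependsOn D a l ∧ DependsOn D b l.neg) ∨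
        ∃ d ∈ r.ante, S d) → S x) →
    S p

/-- The literal `p` appears in the theory `D` (its atom occurs in `D`). -/
def AppearsIn (p : Lit) (D : DTheory) : Prop :=
  (∃ l ∈ D.facts, l.atom = p.atom) ∨
  ∃ r ∈ D.rules, r.head.atom = p.atom ∨ ∃ l ∈ r.ante, l.atom = p.atom

/-- Positive part of the belief set of a defeasible theory. -/
def BSplus (D : DTheory) : Set Lit := {p | AppearsIn p D ∧ Proves D .prt true p}

/-- Negative part of the belief set of a defeasible theory. -/
def BSminus (D : DTheory) : Set Lit := {p | AppearsIn p D ∧ Proves D .prt false p}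

/-- The belief set of a defeasible theory. -/
def BS (D : DTheory) : Set Lit := BSplus D ∪ BSminus D

/-- Edge of the atom dependency graph: from atom `a` to atom `b` whenever some
rule has head with atom `b` and an antecedent literal with atom `a`. -/
def AtomEdge (D : DTheory) (a b : Atom) : Prop :=
  ∃ r ∈ D.rules, r.head.atom = b ∧ ∃ l ∈ r.ante, l.atom = a

/-- A theory is decisive iff every literal appearing in it is defeasibly
provable or defeasibly refuted. -/
def Decisive (D : DTheory) : Prop :=
  ∀ p : Lit, AppearsIn p D → Proves D .prt true p ∨ Proves D .prt false p

end DL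

namespace DLAux

open DL

/-- Filter keeping only `−Σ` entries of a proof. -/
def isSigF : TLit → Bool
  | (Tag.Sig, false, _) => true
  | _ => false

theorem mem_cond {D : DTheory} {P : List TLit} (h : ValidProof D P) :
    ∀ x ∈ P, ∃ P', (∀ y ∈ P', y ∈ P) ∧ Cond D P' x.1 x.2.1 x.2.2 := by
  induction h with
  | nil => simp
  | @snoc P t s q hP hc ih =>
    intro x hx
    rcases List.mem_append.1 hx with h1 | h2
    · obtain ⟨P', hsub, hc'⟩ := ih x h1
      exact ⟨P', fun y hy => List.mem_append.2 (Or.inl (hsub y hy)), hc'⟩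
    · simp only [List.mem_singleton] at h2
      subst h2
      exact ⟨P, fun y hy => List.mem_append.2 (Or.inl hy), hc⟩

theorem filter_valid {D : DTheory} {P : List TLit} (h : ValidProof D P) :
    ValidProof D (P.filter isSigF) := by
  induction h with
  | nil => exact .nil
  | @snoc P t s q hP hc ih =>
    by_cases hf : isSigF (t, s, q) = true
    · have ht : t = Tag.Sig := by cases t <;> cases s <;> simp_all [isSigF]
      have hs : s = false := by cases t <;> cases s <;> simp_all [isSigF]
      subst ht; subst hs
      have heq : (P ++ [(Tag.Sig, false, q)]).filter isSigF
           = P.filter isSigF ++ [(Tag.Sig, false, q)] := by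
        simp [List.filter_append, isSigF]
      rw [heq]
      refine ValidProof.snoc ih ?_
      simp only [Cond] at hc ⊢
      obtain ⟨hnd, hall⟩ := hc
      refine ⟨?_, ?_⟩
      · intro hmem
        have h2 := (List.mem_filter.1 hmem).2
        simp [isSigF] at h2
      · intro r hr hhead
        obtain ⟨a, ha, hmem⟩ := hall r hr hhead
        exact ⟨a, ha, List.mem_filter.2 ⟨hmem, rfl⟩⟩
    · have heq : (P ++ [(t, s, q)]).filter isSigF = P.filter isSigF := by
        simp [List.filter_append, hf]
      rw [heq]; exact ih

end DLAux

open DL in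
/-- If `D ⊢ +φ p` for a literal `p ∉ F` in a consistent defeasible theory `D`,
then `D ⊢ −Σ ∼p`. -/
theorem stmt0 (D : DTheory) (hwf : D.WellFormed) (hcons : Consistent D)
    (p : Lit) (hp : p ∉ D.facts) (h : Proves D .phi true p) :
    Proves D .Sig false p.neg := by
  obtain ⟨P, hP, hmem⟩ := h
  obtain ⟨P', hsub, hc⟩ := DLAux.mem_cond hP _ hmem
  simp only [Cond] at hc
  rcases hc with hdelta | ⟨r, hr, hhead, hante, hdef⟩
  · obtain ⟨P'', _, hc'⟩ := DLAux.mem_cond hP _ (hsub _ hdelta)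
    simp only [Cond] at hc'
    exact absurd hc' hp
  · refine ⟨P.filter DLAux.isSigF ++ [(Tag.Sig, false, p.neg)],
      ValidProof.snoc (DLAux.filter_valid hP) ?_, by simp⟩
    simp only [Cond]
    refine ⟨?_, ?_⟩
    · intro hmem'
      have h2 := (List.mem_filter.1 hmem').2
      simp [DLAux.isSigF] at h2
    · intro s hs hheads
      obtain ⟨a, ha, hma⟩ := hdef s hs hheads
      exact ⟨a, ha, List.mem_filter.2 ⟨hsub _ hma, rfl⟩⟩
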